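/- Let λ be a nonzero finite measure on the unit sphere S of ℝ^d. For a ∈ ℝ^d, a belongs to the linear span of the support of λ if and only if a = ∫_S ξ f(ξ) dλ(ξ) for some bounded measurable function f : S → ℝ. -/

import Mathlib

open MeasureTheory Filter Set

set_option maxHeartbeats 400000

noncomputable section

/-- The topological support of a measure: points all of whose open
neighborhoods have positive measure. -/
def measureSupport {X : Type*} [TopologicalSpace X] [MeasurableSpace X]
    (μ : Measure X) : Set X :=
  {x | ∀ U : Set X, IsOpen U → x ∈ U → 0 < μ U}

open RealInnerProductSpace

lemma aux_ae_norm {d : ℕ} (lam : Measure (EuclideanSpace ℝ (Fin d)))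
    (hsphere : lam (Metric.sphere (0 : EuclideanSpace ℝ (Fin d)) 1)ᶜ = 0) :
    ∀ᵐ ξ ∂lam, ‖ξ‖ ≤ 1 := by
  rw [ae_iff]
  refine measure_mono_null ?_ hsphere
  intro ξ hξ
  simp only [mem_setOf_eq, not_le] at hξ
  simp only [mem_compl_iff, mem_sphere_zero_iff_norm]
  exact ne_of_gt hξ

lemma aux_integrable {d : ℕ} (lam : Measure (EuclideanSpace ℝ (Fin d)))
    [IsFiniteMeasure lam]
    (hsphere : lam (Metric.sphere (0 : EuclideanSpace ℝ (Fin d)) 1)ᶜ = 0)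
    {f : EuclideanSpace ℝ (Fin d) → ℝ} (hf : Measurable f) {C : ℝ}
    (hC : ∀ᵐ ξ ∂lam, |f ξ| ≤ C) :
    Integrable (fun ξ => f ξ • ξ) lam := by
  refine (integrable_const (|C|)).mono'
    ((hf.smul measurable_id).aestronglyMeasurable) ?_
  filter_upwards [hC, aux_ae_norm lam hsphere] with ξ h1 h2
  rw [norm_smul]
  simp only [Real.norm_eq_abs]
  calc |f ξ| * ‖ξ‖ ≤ |C| * 1 :=
        mul_le_mul (h1.trans (le_abs_self C)) h2 (norm_nonneg _) (abs_nonneg _)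
    _ = |C| := mul_one _

lemma aux_supp_ae {d : ℕ} (lam : Measure (EuclideanSpace ℝ (Fin d))) :
    lam (measureSupport lam)ᶜ = 0 := by
  apply measure_null_of_locally_null
  intro x hx
  simp only [measureSupport, mem_compl_iff, mem_setOf_eq, not_forall] at hx
  obtain ⟨U, hUo, hxU, hU0⟩ := hx
  refine ⟨U, mem_nhdsWithin_of_mem_nhds (hUo.mem_nhds hxU), ?_⟩
  simpa using not_lt.mp hU0

/-- The submodule of vectors representable as `∫ ξ f(ξ) dλ(ξ)`. -/
def reprSubmodule {d : ℕ} (lam : Measure (EuclideanSpace ℝ (Fin d)))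
    [IsFiniteMeasure lam]
    (hsphere : lam (Metric.sphere (0 : EuclideanSpace ℝ (Fin d)) 1)ᶜ = 0) :
    Submodule ℝ (EuclideanSpace ℝ (Fin d)) where
  carrier := {b | ∃ f : EuclideanSpace ℝ (Fin d) → ℝ, Measurable f ∧
    (∃ C : ℝ, ∀ᵐ ξ ∂lam, |f ξ| ≤ C) ∧ b = ∫ ξ, f ξ • ξ ∂lam}
  zero_mem' := ⟨0, measurable_const, ⟨0, ae_of_all _ (by simp)⟩, by simp⟩
  add_mem' := by
    rintro b₁ b₂ ⟨f, hf, ⟨Cf, hCf⟩, rfl⟩ ⟨g, hg, ⟨Cg, hCg⟩, rfl⟩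
    refine ⟨f + g, hf.add hg, ⟨Cf + Cg, ?_⟩, ?_⟩
    · filter_upwards [hCf, hCg] with ξ h1 h2
      exact (abs_add_le _ _).trans (add_le_add h1 h2)
    · rw [← integral_add (aux_integrable lam hsphere hf hCf)
        (aux_integrable lam hsphere hg hCg)]
      congr 1; funext ξ; simp [add_smul]
  smul_mem' := by
    rintro c b ⟨f, hf, ⟨Cf, hCf⟩, rfl⟩
    refine ⟨fun ξ => c * f ξ, measurable_const.mul hf, ⟨|c| * Cf, ?_⟩, ?_⟩
    · filter_upwards [hCf] with ξ h1
      rw [abs_mul]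
      exact mul_le_mul_of_nonneg_left h1 (abs_nonneg c)
    · rw [← integral_smul]
      congr 1; funext ξ; simp [smul_smul]

lemma mem_reprSubmodule {d : ℕ} (lam : Measure (EuclideanSpace ℝ (Fin d)))
    [IsFiniteMeasure lam]
    (hsphere : lam (Metric.sphere (0 : EuclideanSpace ℝ (Fin d)) 1)ᶜ = 0)
    (b : EuclideanSpace ℝ (Fin d)) :
    b ∈ reprSubmodule lam hsphere ↔
      ∃ f : EuclideanSpace ℝ (Fin d) → ℝ, Measurable f ∧
        (∃ C : ℝ, ∀ᵐ ξ ∂lam, |f ξ| ≤ C) ∧ b = ∫ ξ, f ξ • ξ ∂lam :=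
  Iff.rfl

lemma supp_subset_repr {d : ℕ} (lam : Measure (EuclideanSpace ℝ (Fin d)))
    [IsFiniteMeasure lam]
    (hsphere : lam (Metric.sphere (0 : EuclideanSpace ℝ (Fin d)) 1)ᶜ = 0) :
    measureSupport lam ⊆ (reprSubmodule lam hsphere : Set _) := by
  intro x hx
  have hclosed : IsClosed ((reprSubmodule lam hsphere :
      Submodule ℝ (EuclideanSpace ℝ (Fin d))) : Set (EuclideanSpace ℝ (Fin d))) :=
    (reprSubmodule lam hsphere).closed_of_finiteDimensional
  rw [← hclosed.closure_eq, Metric.mem_closure_iff]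
  intro ε hε
  have hB : 0 < lam (Metric.ball x (ε / 2)) :=
    hx _ Metric.isOpen_ball (Metric.mem_ball_self (by linarith))
  set B := Metric.ball x (ε / 2) with hBdef
  have htoReal : 0 < (lam B).toReal :=
    ENNReal.toReal_pos hB.ne' (measure_lt_top lam B).ne
  obtain ⟨c, hcdef, hcpos⟩ : ∃ c : ℝ, c = ((lam B).toReal)⁻¹ ∧ 0 < c :=
    ⟨_, rfl, inv_pos.mpr htoReal⟩
  have hcmul : c * (lam B).toReal = 1 := by
    rw [hcdef]; exact inv_mul_cancel₀ htoReal.ne'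
  have hfmeas : Measurable (B.indicator (fun _ => c)) :=
    measurable_const.indicator Metric.isOpen_ball.measurableSet
  have hbd : ∀ᵐ ξ ∂lam, |B.indicator (fun _ => c) ξ| ≤ c := by
    refine ae_of_all _ fun ξ => ?_
    by_cases h : ξ ∈ B <;> simp [h, hcpos.le, abs_of_nonneg hcpos.le]
  have hyM : (∫ ξ, (B.indicator (fun _ => c) ξ) • ξ ∂lam) ∈
      (reprSubmodule lam hsphere : Set _) :=
    ⟨_, hfmeas, ⟨c, hbd⟩, rfl⟩
  have hint : Integrable (fun ξ => ξ) (lam.restrict B) := by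
    refine (integrable_const 1).mono' aestronglyMeasurable_id ?_
    exact ae_restrict_of_ae (aux_ae_norm lam hsphere)
  have h1 : (∫ ξ, (B.indicator (fun _ => c) ξ) • ξ ∂lam) = c • ∫ ξ in B, ξ ∂lam := by
    have heq : ∀ ξ, (B.indicator (fun _ => c) ξ) • ξ
        = B.indicator (fun ξ => c • ξ) ξ := fun ξ => by
      by_cases h : ξ ∈ B <;> simp [h]
    simp_rw [heq]
    rw [integral_indicator Metric.isOpen_ball.measurableSet, integral_smul]
  have h2 : ∫ _ in B, x ∂lam = (lam B).toReal • x := by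
    rw [setIntegral_const]; rfl
  have h3 : ‖(∫ ξ in B, ξ ∂lam) - (lam B).toReal • x‖ ≤ ε / 2 * (lam B).toReal := by
    rw [← h2, ← integral_sub hint (integrable_const x)]
    refine norm_setIntegral_le_of_norm_le_const (measure_lt_top lam B) ?_
    · intro ξ hξ
      rw [hBdef] at hξ
      have := Metric.mem_ball.mp hξ
      rw [dist_eq_norm] at this
      exact this.le
  have h4 : (∫ ξ, (B.indicator (fun _ => c) ξ) • ξ ∂lam) - x
      = c • ((∫ ξ in B, ξ ∂lam) - (lam B).toReal • x) := by
    rw [h1, smul_sub, smul_smul, hcmul, one_smul]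
  refine ⟨_, hyM, ?_⟩
  rw [dist_eq_norm, norm_sub_rev, h4, norm_smul, Real.norm_eq_abs,
    abs_of_nonneg hcpos.le]
  calc c * ‖(∫ ξ in B, ξ ∂lam) - (lam B).toReal • x‖
      ≤ c * (ε / 2 * (lam B).toReal) := mul_le_mul_of_nonneg_left h3 hcpos.le
    _ = ε / 2 * (c * (lam B).toReal) := by ring
    _ = ε / 2 := by rw [hcmul, mul_one]
    _ < ε := by linarith

lemma repr_mem_span {d : ℕ} (lam : Measure (EuclideanSpace ℝ (Fin d)))
    [IsFiniteMeasure lam]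
    (hsphere : lam (Metric.sphere (0 : EuclideanSpace ℝ (Fin d)) 1)ᶜ = 0)
    {f : EuclideanSpace ℝ (Fin d) → ℝ} (hf : Measurable f) {C : ℝ}
    (hC : ∀ᵐ ξ ∂lam, |f ξ| ≤ C) :
    (∫ ξ, f ξ • ξ ∂lam) ∈ Submodule.span ℝ (measureSupport lam) := by
  set p := Submodule.span ℝ (measureSupport lam) with hpdef
  rw [← Submodule.orthogonal_orthogonal p, Submodule.mem_orthogonal]
  intro u hu
  have hint := aux_integrable lam hsphere hf hC
  rw [← integral_inner hint]
  have hae : ∀ᵐ ξ ∂lam, ξ ∈ measureSupport lam := by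
    rw [ae_iff]
    exact aux_supp_ae lam
  rw [← integral_zero (EuclideanSpace ℝ (Fin d)) ℝ (μ := lam)]
  refine integral_congr_ae ?_
  filter_upwards [hae] with ξ hξ
  have hξp : ξ ∈ p := Submodule.subset_span hξ
  have h0 : ⟪ξ, u⟫ = 0 := (Submodule.mem_orthogonal p u).mp hu ξ hξp
  rw [real_inner_smul_right, real_inner_comm, h0, mul_zero]

/-- for a nonzero finite measure `λ` on the unit sphere of `ℝ^d`,
a vector `a` lies in the linear span of the support of `λ` iff
`a = ∫_S ξ f(ξ) dλ(ξ)` for some bounded measurable `f`. -/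
theorem stmt0 {d : ℕ}
    (lam : Measure (EuclideanSpace ℝ (Fin d))) [IsFiniteMeasure lam]
    (hne : lam ≠ 0)
    (hsphere : lam (Metric.sphere (0 : EuclideanSpace ℝ (Fin d)) 1)ᶜ = 0)
    (a : EuclideanSpace ℝ (Fin d)) :
    a ∈ Submodule.span ℝ (measureSupport lam) ↔
      ∃ f : EuclideanSpace ℝ (Fin d) → ℝ, Measurable f ∧
        (∃ C : ℝ, ∀ᵐ ξ ∂lam, |f ξ| ≤ C) ∧
        a = ∫ ξ, f ξ • ξ ∂lam := by
  constructor
  · intro ha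
    exact (mem_reprSubmodule lam hsphere a).mp
      (Submodule.span_le.mpr (supp_subset_repr lam hsphere) ha)
  · rintro ⟨f, hf, ⟨C, hC⟩, rfl⟩
    exact repr_mem_span lam hsphere hf hC
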